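/- Let 0 < k < 1 and define h_k(z) = 1 − k² sin² z for z ∈ ℂ. Then h_k(z) = 0 if and only if z = (π/2 + nπ) ± i·arcosh(1/k) for some integer n. -/

import Mathlib

noncomputable def arcosh (x : ℝ) : ℝ := Real.log (x + Real.sqrt (x ^ 2 - 1))

lemma cosh_arcosh {x : ℝ} (hx : 1 ≤ x) : Real.cosh (arcosh x) = x := by
  have h0 : 0 ≤ x ^ 2 - 1 := by nlinarith
  have hs : Real.sqrt (x ^ 2 - 1) ^ 2 = x ^ 2 - 1 := Real.sq_sqrt h0
  have hspos : 0 ≤ Real.sqrt (x ^ 2 - 1) := Real.sqrt_nonneg _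
  have ht : 0 < x + Real.sqrt (x ^ 2 - 1) := by nlinarith
  rw [arcosh, Real.cosh_eq, Real.exp_neg, Real.exp_log ht]
  have hinv : (x + Real.sqrt (x ^ 2 - 1))⁻¹ = x - Real.sqrt (x ^ 2 - 1) :=
    inv_eq_of_mul_eq_one_right (by nlinarith)
  rw [hinv]; ring
theorem zeros_of_hk (k : ℝ) (h0 : 0 < k) (h1 : k < 1) (z : ℂ) :
    1 - (k : ℂ) ^ 2 * Complex.sin z ^ 2 = 0 ↔
      ∃ n : ℤ,
        z = ((Real.pi / 2 + n * Real.pi : ℝ) : ℂ) + (arcosh (1 / k) : ℝ) * Complex.I ∨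
        z = ((Real.pi / 2 + n * Real.pi : ℝ) : ℂ) - (arcosh (1 / k) : ℝ) * Complex.I := by
  set ρ : ℝ := arcosh (1 / k) with hρdef
  have hk0 : (k : ℂ) ≠ 0 := by exact_mod_cast h0.ne'
  have hkle : (1 : ℝ) ≤ 1 / k := by
    rw [le_div_iff₀ h0]; linarith
  have hcosh : Real.cosh ρ = 1 / k := cosh_arcosh hkle
  set w : ℂ := (Real.pi / 2 : ℂ) + (ρ : ℂ) * Complex.I with hw
  have hsinw : Complex.sin w = 1 / (k : ℂ) := by
    rw [hw, add_comm, Complex.sin_add_pi_div_two, Complex.cos_mul_I,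
      ← Complex.ofReal_cosh, hcosh]
    push_cast
    ring
  constructor
  · intro h
    have hs : Complex.sin z = Complex.sin w ∨ Complex.sin z = -Complex.sin w := by
      rw [hsinw]
      have : ((k : ℂ) * Complex.sin z - 1) * ((k : ℂ) * Complex.sin z + 1) = 0 := by
        linear_combination -h
      rcases mul_eq_zero.1 this with h' | h'
      · left
        field_simp
        linear_combination h'
      · right
        field_simp
        linear_combination h'
    rcases hs with hs | hs
    · rw [eq_comm, Complex.sin_eq_sin_iff] at hs
      obtain ⟨m, hm | hm⟩ := hs
      · exact ⟨2 * m, Or.inl (by rw [hm, hw]; push_cast; ring)⟩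
      · exact ⟨2 * m, Or.inr (by rw [hm, hw]; push_cast; ring)⟩
    · rw [← Complex.sin_neg, eq_comm, Complex.sin_eq_sin_iff] at hs
      obtain ⟨m, hm | hm⟩ := hs
      · exact ⟨2 * m - 1, Or.inr (by rw [hm, hw]; push_cast; ring)⟩
      · exact ⟨2 * m + 1, Or.inl (by rw [hm, hw]; push_cast; ring)⟩
  · rintro ⟨n, hn | hn⟩
    · have hsq : Complex.sin z ^ 2 = (1 / (k : ℂ)) ^ 2 := by
        rcases Int.even_or_odd n with ⟨m, hm⟩ | ⟨m, hm⟩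
        · have : Complex.sin w = Complex.sin z := by
            rw [Complex.sin_eq_sin_iff]
            exact ⟨m, Or.inl (by rw [hn, hw, hm]; push_cast; ring)⟩
          rw [← this, hsinw]
        · have : Complex.sin (-w) = Complex.sin z := by
            rw [Complex.sin_eq_sin_iff]
            exact ⟨m, Or.inr (by rw [hn, hw, hm]; push_cast; ring)⟩
          rw [← this, Complex.sin_neg, hsinw]
          ring
      rw [hsq]
      field_simp
      ring
    · have hsq : Complex.sin z ^ 2 = (1 / (k : ℂ)) ^ 2 := by
        rcases Int.even_or_odd n with ⟨m, hm⟩ | ⟨m, hm⟩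
        · have : Complex.sin w = Complex.sin z := by
            rw [Complex.sin_eq_sin_iff]
            exact ⟨m, Or.inr (by rw [hn, hw, hm]; push_cast; ring)⟩
          rw [← this, hsinw]
        · have : Complex.sin (-w) = Complex.sin z := by
            rw [Complex.sin_eq_sin_iff]
            exact ⟨m + 1, Or.inl (by rw [hn, hw, hm]; push_cast; ring)⟩
          rw [← this, Complex.sin_neg, hsinw]
          ring
      rw [hsq]
      field_simp
      ring
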